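/- Let W₁, …, W_N be real m×m matrices and A₁, …, A_N real n×n matrices such that the spectral radius of the nonnegative matrix ∑_{i=1}^N |A_iᵀ ⊗ W_i| is strictly less than 1. Then for every componentwise non-expansive φ : ℝ → ℝ and every choice of real m×n matrices B₁, …, B_N, the equation X = φ(∑_{i=1}^N (W_i X A_i + B_i)), with φ applied entrywise, has exactly one solution X ∈ ℝ^{m×n}; moreover the iteration X₀ = 0, X_{t+1} = φ(∑_{i=1}^N (W_i X_t A_i + B_i)) converges to this solution. -/

import Mathlib

open Matrix Kronecker Filter

/-- The spectral radius of a real square matrix: the supremum of the moduli of its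
complex eigenvalues (elements of the spectrum of the matrix viewed over `ℂ`). -/
noncomputable def specRad {ι : Type*} [Fintype ι] [DecidableEq ι]
    (M : Matrix ι ι ℝ) : ENNReal :=
  spectralRadius ℂ (M.map Complex.ofReal)

section Aux

attribute [local instance] Matrix.linftyOpNormedAddCommGroup Matrix.linftyOpNormedRing
  Matrix.linftyOpNormedAlgebra

lemma aux_norm_bound {ι : Type*} [Fintype ι] [DecidableEq ι] (M : Matrix ι ι ℝ)
    (h : specRad M < 1) :
    ∃ r : NNReal, r < 1 ∧ ∀ᶠ t in atTop, ‖M ^ t‖₊ ≤ r ^ t := by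
  haveI : CompleteSpace (Matrix ι ι ℂ) :=
    (by infer_instance)
  have hg := spectrum.pow_nnnorm_pow_one_div_tendsto_nhds_spectralRadius (M.map Complex.ofReal)
  obtain ⟨r, hr1, hr2⟩ := exists_between h
  have hrt : r ≠ ⊤ := (hr2.trans_le le_top).ne
  refine ⟨r.toNNReal, ?_, ?_⟩
  · have := ENNReal.coe_toNNReal hrt
    rw [← ENNReal.coe_lt_one_iff, this]; exact hr2
  · have hev : ∀ᶠ t : ℕ in atTop,
        (‖(M.map Complex.ofReal) ^ t‖₊ : ENNReal) ^ (1 / (t:ℕ) : ℝ) < r :=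
      hg.eventually_lt_const hr1
    filter_upwards [hev, eventually_ge_atTop 1] with t ht ht1
    have htne : (t : ℝ) ≠ 0 := Nat.cast_ne_zero.mpr (by omega)
    have hnorm_eq : ‖(M.map Complex.ofReal) ^ t‖₊ = ‖M ^ t‖₊ := by
      have : (M.map Complex.ofReal) ^ t = (M ^ t).map Complex.ofReal := by
        exact (map_pow (Complex.ofRealHom.mapMatrix) M t).symm
      rw [this, Matrix.linfty_opNNNorm_def, Matrix.linfty_opNNNorm_def]
      simp [Matrix.map_apply]
    rw [hnorm_eq] at ht
    have : (‖M ^ t‖₊ : ENNReal) ≤ r ^ t := by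
      have h2 := ENNReal.rpow_le_rpow ht.le (by positivity : (0:ℝ) ≤ (t:ℝ))
      rw [← ENNReal.rpow_mul, one_div, inv_mul_cancel₀ htne, ENNReal.rpow_one,
        ENNReal.rpow_natCast] at h2
      exact h2
    rw [← ENNReal.coe_toNNReal hrt, ← ENNReal.coe_pow, ENNReal.coe_le_coe] at this
    exact this

lemma aux_main {ι : Type*} [Fintype ι] [DecidableEq ι] (M : Matrix ι ι ℝ)
    (hM : specRad M < 1) (hMnn : ∀ p q, 0 ≤ M p q)
    (g : (ι → ℝ) → (ι → ℝ))
    (hg1 : ∀ u v (p : ι), |g u p - g v p| ≤ M.mulVec (fun q => |u q - v q|) p) :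
    ∃ z : ι → ℝ, g z = z ∧ (∀ w, g w = w → w = z) ∧
      ∀ x0 : ι → ℝ, Filter.Tendsto (fun t => g^[t] x0) Filter.atTop (nhds z) := by
  obtain ⟨r, hr1, hrev⟩ := aux_norm_bound M hM
  have hgiter : ∀ t u v (p : ι),
      |g^[t] u p - g^[t] v p| ≤ (M ^ t).mulVec (fun q => |u q - v q|) p := by
    intro t
    induction t with
    | zero =>
      intro u v p
      simp [Matrix.one_mulVec]
    | succ t ih =>
      intro u v p
      rw [Function.iterate_succ_apply', Function.iterate_succ_apply']
      refine (hg1 _ _ p).trans ?_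
      calc M.mulVec (fun q => |g^[t] u q - g^[t] v q|) p
          ≤ M.mulVec ((M ^ t).mulVec (fun q => |u q - v q|)) p := by
            simp only [Matrix.mulVec, dotProduct]
            exact Finset.sum_le_sum fun q _ =>
              mul_le_mul_of_nonneg_left (ih u v q) (hMnn p q)
        _ = (M ^ (t+1)).mulVec (fun q => |u q - v q|) p := by
            rw [Matrix.mulVec_mulVec, ← pow_succ']
  have hdist : ∀ t (u v : ι → ℝ),
      dist (g^[t] u) (g^[t] v) ≤ ‖M ^ t‖ * dist u v := by
    intro t u v
    rw [dist_eq_norm, dist_eq_norm]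
    have hnn : (0:ℝ) ≤ ‖M ^ t‖ * ‖u - v‖ := by positivity
    rw [pi_norm_le_iff_of_nonneg hnn]
    intro p
    have h5 : ‖(fun q => |u q - v q| : ι → ℝ)‖ = ‖u - v‖ := by
      simp [Pi.norm_def, Real.nnnorm_abs]
    calc ‖(g^[t] u - g^[t] v) p‖ = |g^[t] u p - g^[t] v p| := rfl
      _ ≤ (M ^ t).mulVec (fun q => |u q - v q|) p := hgiter t u v p
      _ ≤ ‖(M ^ t).mulVec (fun q => |u q - v q|)‖ := by
          have h6 := norm_le_pi_norm ((M ^ t).mulVec fun q => |u q - v q|) p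
          rw [Real.norm_eq_abs] at h6
          exact (le_abs_self _).trans h6
      _ ≤ ‖M ^ t‖ * ‖(fun q => |u q - v q| : ι → ℝ)‖ :=
          Matrix.linfty_opNorm_mulVec _ _
      _ = ‖M ^ t‖ * ‖u - v‖ := by rw [h5]
  obtain ⟨k, hk1, hk⟩ : ∃ k, 1 ≤ k ∧ ‖M ^ k‖₊ ≤ r ^ k := by
    rw [Filter.eventually_atTop] at hrev
    obtain ⟨k0, hk0⟩ := hrev
    exact ⟨max k0 1, le_max_right _ _, hk0 _ (le_max_left _ _)⟩
  have hcnorm : ‖M ^ k‖₊ < 1 :=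
    hk.trans_lt (pow_lt_one₀ (by positivity) hr1 (by omega))
  have hcontr : ContractingWith ‖M ^ k‖₊ (g^[k]) := by
    refine ⟨hcnorm, LipschitzWith.of_dist_le_mul fun u v => ?_⟩
    simpa [coe_nnnorm] using hdist k u v
  set z := ContractingWith.fixedPoint (g^[k]) hcontr with hzdef
  have hz : g^[k] z = z := hcontr.fixedPoint_isFixedPt
  have hfix : ∀ w, g^[k] w = w → w = z := fun w hw => hcontr.fixedPoint_unique hw
  have hgz : g z = z := by
    refine hfix _ ?_
    rw [← Function.iterate_succ_apply, Function.iterate_succ_apply', hz]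
  have hzt : ∀ t, g^[t] z = z := fun t => Function.IsFixedPt.iterate hgz t
  have hnorm0 : Filter.Tendsto (fun t => ‖M ^ t‖) Filter.atTop (nhds 0) := by
    have hr0 : Filter.Tendsto (fun t : ℕ => (r:ℝ) ^ t) Filter.atTop (nhds 0) :=
      tendsto_pow_atTop_nhds_zero_of_lt_one r.coe_nonneg (by exact_mod_cast hr1)
    refine squeeze_zero' (Filter.Eventually.of_forall fun t => norm_nonneg _) ?_ hr0
    filter_upwards [hrev] with t ht
    exact_mod_cast ht
  refine ⟨z, hgz, fun w hw => hfix w (Function.IsFixedPt.iterate hw k), fun x0 => ?_⟩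
  rw [tendsto_iff_dist_tendsto_zero]
  refine squeeze_zero (fun t => dist_nonneg) (fun t => ?_)
    (by simpa using hnorm0.mul_const (dist x0 z))
  calc dist (g^[t] x0) z = dist (g^[t] x0) (g^[t] z) := by rw [hzt t]
    _ ≤ ‖M ^ t‖ * dist x0 z := hdist t _ _

end Aux

theorem stmt_5 {m n N : ℕ}
    (W : Fin N → Matrix (Fin m) (Fin m) ℝ) (A : Fin N → Matrix (Fin n) (Fin n) ℝ)
    (hρ : specRad (∑ i, ((A i)ᵀ ⊗ₖ W i).map fun a => |a|) < 1)
    (φ : ℝ → ℝ) (hφ : ∀ a b : ℝ, |φ a - φ b| ≤ |a - b|)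
    (B : Fin N → Matrix (Fin m) (Fin n) ℝ)
    (X : ℕ → Matrix (Fin m) (Fin n) ℝ)
    (hX0 : X 0 = 0)
    (hXs : ∀ t, X (t + 1) = (∑ i, (W i * X t * A i + B i)).map φ) :
    ∃ Xs : Matrix (Fin m) (Fin n) ℝ,
      Xs = (∑ i, (W i * Xs * A i + B i)).map φ ∧
      (∀ Y : Matrix (Fin m) (Fin n) ℝ, Y = (∑ i, (W i * Y * A i + B i)).map φ → Y = Xs) ∧
      Tendsto X atTop (nhds Xs) := by
  classical
  set M : Matrix (Fin n × Fin m) (Fin n × Fin m) ℝ :=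
    ∑ i, ((A i)ᵀ ⊗ₖ W i).map (fun a => |a|) with hMdef
  set F : Matrix (Fin m) (Fin n) ℝ → Matrix (Fin m) (Fin n) ℝ :=
    fun Z => (∑ i, (W i * Z * A i + B i)).map φ with hFdef
  set g : ((Fin n × Fin m) → ℝ) → ((Fin n × Fin m) → ℝ) :=
    fun v p => F (Matrix.of fun k j => v (j, k)) p.2 p.1 with hgdef
  have hMapp : ∀ p q : Fin n × Fin m, M p q = ∑ i, |A i q.1 p.1 * W i p.2 q.2| := by
    intro p q
    simp [hMdef, Matrix.sum_apply, Matrix.map_apply, Matrix.kroneckerMap_apply,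
      Matrix.transpose_apply]
  have hMnn : ∀ p q, 0 ≤ M p q := by
    intro p q; rw [hMapp]; positivity
  have hg1 : ∀ u v (p : Fin n × Fin m),
      |g u p - g v p| ≤ M.mulVec (fun q => |u q - v q|) p := by
    intro u v p
    have h1 : |g u p - g v p| ≤
        |(∑ i, (W i * (Matrix.of fun k j => u (j, k)) * A i + B i)) p.2 p.1 -
         (∑ i, (W i * (Matrix.of fun k j => v (j, k)) * A i + B i)) p.2 p.1| := hφ _ _
    refine h1.trans ?_
    have hexp : ∀ (U : Matrix (Fin m) (Fin n) ℝ), (∑ i, (W i * U * A i + B i)) p.2 p.1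
        = (∑ i, B i p.2 p.1) + ∑ i, ∑ j', ∑ k', A i j' p.1 * W i p.2 k' * U k' j' := by
      intro U
      simp only [Matrix.sum_apply, Matrix.add_apply, Matrix.mul_apply]
      rw [Finset.sum_add_distrib, add_comm]
      congr 1
      refine Finset.sum_congr rfl fun i _ => ?_
      simp only [Finset.sum_mul]
      exact Finset.sum_congr rfl fun j' _ => Finset.sum_congr rfl fun k' _ => by ring
    have heq : (∑ i, (W i * (Matrix.of fun k j => u (j, k)) * A i + B i)) p.2 p.1 -
         (∑ i, (W i * (Matrix.of fun k j => v (j, k)) * A i + B i)) p.2 p.1 =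
        ∑ q : Fin n × Fin m, ∑ i, A i q.1 p.1 * W i p.2 q.2 * (u q - v q) := by
      rw [hexp, hexp, add_sub_add_left_eq_sub]
      simp only [← Finset.sum_sub_distrib, Matrix.of_apply, ← mul_sub]
      rw [Fintype.sum_prod_type]
      rw [Finset.sum_comm]
      exact Finset.sum_congr rfl fun j' _ => Finset.sum_comm
    rw [heq]
    calc |∑ q : Fin n × Fin m, ∑ i, A i q.1 p.1 * W i p.2 q.2 * (u q - v q)|
        ≤ ∑ q : Fin n × Fin m, |∑ i, A i q.1 p.1 * W i p.2 q.2 * (u q - v q)| :=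
          Finset.abs_sum_le_sum_abs _ _
      _ ≤ ∑ q : Fin n × Fin m, ∑ i, |A i q.1 p.1 * W i p.2 q.2| * |u q - v q| := by
          refine Finset.sum_le_sum fun q _ => ?_
          refine (Finset.abs_sum_le_sum_abs _ _).trans ?_
          refine Finset.sum_le_sum fun i _ => ?_
          rw [abs_mul]
      _ = M.mulVec (fun q => |u q - v q|) p := by
          simp only [Matrix.mulVec, dotProduct, hMapp, Finset.sum_mul]
  obtain ⟨z, hgz, hfix, hconv0⟩ := aux_main M hρ hMnn g hg1
  have hXt : ∀ t, (fun p : Fin n × Fin m => X t p.2 p.1) =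
      g^[t] (fun p : Fin n × Fin m => X 0 p.2 p.1) := by
    intro t
    induction t with
    | zero => rfl
    | succ t ih =>
      rw [Function.iterate_succ_apply', ← ih]
      funext p
      rw [hXs t]
      rfl
  have hconv : Tendsto (fun t => (fun p : Fin n × Fin m => X t p.2 p.1)) atTop (nhds z) := by
    have h0 := hconv0 (fun p : Fin n × Fin m => X 0 p.2 p.1)
    have hfun : (fun t => (fun p : Fin n × Fin m => X t p.2 p.1)) =
        fun t => g^[t] (fun p : Fin n × Fin m => X 0 p.2 p.1) := funext hXt
    rw [hfun]
    exact h0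
  refine ⟨Matrix.of fun a b => z (b, a), ?_, ?_, ?_⟩
  · ext a b
    exact (congrFun hgz (b, a)).symm
  · intro Y hY
    have hYfix : g (fun p : Fin n × Fin m => Y p.2 p.1) = fun p : Fin n × Fin m => Y p.2 p.1 := by
      funext p
      show F (Matrix.of fun a b => Y a b) p.2 p.1 = Y p.2 p.1
      have hofY : (Matrix.of fun a b => Y a b) = Y := rfl
      rw [hofY, hFdef]
      exact congrFun (congrFun hY.symm p.2) p.1
    have hYz : (fun p : Fin n × Fin m => Y p.2 p.1) = z := hfix (fun p => Y p.2 p.1) hYfix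
    ext a b
    exact congrFun hYz (b, a)
  · apply tendsto_pi_nhds.mpr
    intro a
    rw [tendsto_pi_nhds]
    intro b
    exact (tendsto_pi_nhds.mp hconv) (b, a)
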